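/- For every x ∈ ℕ^d and every j ∈ [d], the weight satisfies W(g_j(x)) = W(x) + j − 1. -/

import Mathlib

namespace Spiral

/-- The size `n(x) = n₁ + ⋯ + n_d` of a configuration `x ∈ ℕ^d`. -/
def size {d : ℕ} (x : Fin d → ℕ) : ℕ := ∑ i, x i

/-- The weight `W(x) = Σ_{i<j} (max(0, x_j − x_i) + max(0, x_i − x_j − 1))`
(truncated ℕ-subtraction realizes the `max(0,·)`). -/
def weight {d : ℕ} (x : Fin d → ℕ) : ℕ :=
  ∑ i : Fin d, ∑ j : Fin d, if i < j then (x j - x i) + (x i - x j - 1) else 0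

/-- The configuration `x` as a set of points of `[d] × ℕ`: the point `(i, n)` (seat `i`
0-indexed, level `n`) is encoded as the natural number `n*d + i`. The usual order on the
encodings is exactly the height order `≺` (height `h(i,n) = n + i/d`), and the spiral
shift `δ + s/d` is encoded as `+ s`. -/
def pts (d : ℕ) (x : Fin d → ℕ) : Finset ℕ :=
  Finset.image (fun i : Fin d => x i * d + i.val) Finset.univ

/-- The points of `x` listed in increasing height order: `δ¹(x), …, δ^d(x)`. -/
def sortedPts (d : ℕ) (x : Fin d → ℕ) : List ℕ :=
  (pts d x).sort (· ≤ ·)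

/-- The lowest point strictly above `p` (along the spiral) whose seat lies in `S`. -/
noncomputable def nextPt (d : ℕ) (S : Finset ℕ) (p : ℕ) : ℕ :=
  sInf {q : ℕ | p < q ∧ q % d ∈ S}

/-- The spiral shifting operator `g_j` (for `1 ≤ j ≤ d`): it fixes the lowest `j - 1`
points `δ¹(x), …, δ^{j-1}(x)` and moves each remaining point `δ^k(x)` (`k ≥ j`) to
`δ^k(x) + s_k/d`, where `s_k` is the minimal positive integer such that the seat of
`δ^k(x) + s_k/d` lies in `{i(δ^j(x)), …, i(δ^d(x))}`. The resulting configuration is read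
off from the new point set (which has exactly one point per seat). -/
noncomputable def gOp (d : ℕ) (j : ℕ) (x : Fin d → ℕ) : Fin d → ℕ := fun i =>
  let L := sortedPts d x
  let low := L.take (j - 1)
  let high := L.drop (j - 1)
  let S : Finset ℕ := high.toFinset.image (· % d)
  let Q : Finset ℕ := low.toFinset ∪ (high.map (nextPt d S)).toFinset
  ∑ q ∈ Q.filter (fun q => q % d = i.val), q / d

/-- `g^a := g₁^{a₁} ∘ ⋯ ∘ g_d^{a_d}` (here `a i` is the exponent of `g_{i+1}`). -/
noncomputable def gIter (d : ℕ) (a : Fin d → ℕ) (x : Fin d → ℕ) : Fin d → ℕ :=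
  (List.finRange d).foldr (fun j y => (gOp d (j.val + 1))^[a j] y) x

end Spiral

namespace SpiralAux

/-- The unique `s ∈ [1,d]` with `(r+s) % d = c`, for `r, c < d`. -/
def Dist (d r c : ℕ) : ℕ := (d + c - (r + 1)) % d + 1

lemma dist_pos (d r c : ℕ) : 0 < Dist d r c := Nat.succ_pos _

lemma dist_le {d : ℕ} (hd : 0 < d) (r c : ℕ) : Dist d r c ≤ d := by
  have := Nat.mod_lt (d + c - (r + 1)) hd
  unfold Dist; omega

lemma dist_spec {d r c : ℕ} (hr : r < d) (hc : c < d) : (r + Dist d r c) % d = c := by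
  have hd : 0 < d := by omega
  have h1 := Nat.mod_add_div (d + c - (r + 1)) d
  have key : r + Dist d r c = (d + c) - d * ((d + c - (r + 1)) / d) := by
    unfold Dist; omega
  have h2 : d * ((d + c - (r + 1)) / d) ≤ d + c := by omega
  rw [key, Nat.sub_mul_mod h2, Nat.add_mod_left, Nat.mod_eq_of_lt hc]

lemma dist_unique {d r c s : ℕ} (hr : r < d) (hc : c < d) (h1 : 1 ≤ s) (h2 : s ≤ d)
    (h : (r + s) % d = c) : s = Dist d r c := by
  have hd : 0 < d := by omega
  have h' := dist_spec hr hc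
  have h3 : s ≡ Dist d r c [MOD d] :=
    Nat.ModEq.add_left_cancel' r (by unfold Nat.ModEq; rw [h, h'])
  have hD1 := dist_pos d r c
  have hD2 := dist_le hd r c
  rcases le_total s (Dist d r c) with hle | hle
  · have hdvd := (Nat.modEq_iff_dvd' hle).mp h3
    have := Nat.eq_zero_of_dvd_of_lt hdvd
    omega
  · have hdvd := (Nat.modEq_iff_dvd' hle).mp h3.symm
    have := Nat.eq_zero_of_dvd_of_lt hdvd
    omega

lemma dist_lt_of_ne {d r c : ℕ} (hr : r < d) (hc : c < d) (hne : r ≠ c) : Dist d r c < d := by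
  have hd : 0 < d := by omega
  rcases Nat.lt_or_ge (Dist d r c) d with h | h
  · exact h
  · exfalso
    have heq : Dist d r c = d := le_antisymm (dist_le hd r c) h
    have := dist_spec hr hc
    rw [heq, Nat.add_mod_right, Nat.mod_eq_of_lt hr] at this
    exact hne this

lemma dist_inj {d r r' c : ℕ} (hr : r < d) (hr' : r' < d) (hc : c < d)
    (h : Dist d r c = Dist d r' c) : r = r' := by
  have hd : 0 < d := by omega
  have h1 := dist_spec hr hc
  have h2 := dist_spec hr' hc
  rw [← h] at h2
  have h3 : r ≡ r' [MOD d] := Nat.ModEq.add_right_cancel' _ (by unfold Nat.ModEq; rw [h1, h2])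
  have := h3
  unfold Nat.ModEq at this
  rwa [Nat.mod_eq_of_lt hr, Nat.mod_eq_of_lt hr'] at this

/-- if `c'` is strictly closer ahead of `r` than `c`, then the leftover distance is `Dist c' c`. -/
lemma dist_sub {d r a b : ℕ} (hr : r < d) (ha : a < d) (hb : b < d)
    (h : Dist d r a < Dist d r b) : Dist d a b = Dist d r b - Dist d r a := by
  have hd : 0 < d := by omega
  have h1 := dist_spec hr ha
  have h2 := dist_spec hr hb
  have hpa := dist_pos d r a
  have hlb := dist_le hd r b
  set s := Dist d r b - Dist d r a with hs
  have hspec : (a + s) % d = b := by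
    have e1 : (r + Dist d r a) + s = r + Dist d r b := by omega
    calc (a + s) % d = ((r + Dist d r a) % d + s) % d := by rw [h1]
      _ = ((r + Dist d r a) + s) % d := Nat.mod_add_mod _ _ _
      _ = b := by rw [e1, h2]
  exact (dist_unique ha hb (by omega) (by omega) hspec).symm

/-- subtracting distances to a common target gives the distance between sources. -/
lemma dist_sub' {d r r' c : ℕ} (hr : r < d) (hr' : r' < d) (hc : c < d)
    (h : Dist d r' c < Dist d r c) : Dist d r r' = Dist d r c - Dist d r' c := by
  have hd : 0 < d := by omega
  have h1 := dist_spec hr hc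
  have h2 := dist_spec hr' hc
  have hpa := dist_pos d r' c
  have hlb := dist_le hd r c
  set s := Dist d r c - Dist d r' c with hs
  have hspec : (r + s) % d = r' := by
    have e1 : (r + s) + Dist d r' c = r + Dist d r c := by omega
    have h4 : ((r + s) + Dist d r' c) % d = (r' + Dist d r' c) % d := by rw [e1, h1, h2]
    have h5 : (r + s) ≡ r' [MOD d] := Nat.ModEq.add_right_cancel' _ h4
    unfold Nat.ModEq at h5
    rwa [Nat.mod_eq_of_lt hr'] at h5
  exact (dist_unique hr hr' (by omega) (by omega) hspec).symm

lemma dist_add_dist {d r c : ℕ} (hr : r < d) (hc : c < d) (hne : r ≠ c) :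
    Dist d r c + Dist d c r = d := by
  have hd : 0 < d := by omega
  have h1 := dist_spec hr hc
  have h2 := dist_spec hc hr
  have hs : (r + (Dist d r c + Dist d c r)) % d = r % d := by
    calc (r + (Dist d r c + Dist d c r)) % d
        = ((r + Dist d r c) + Dist d c r) % d := by rw [Nat.add_assoc]
      _ = ((r + Dist d r c) % d + Dist d c r) % d := (Nat.mod_add_mod _ _ _).symm
      _ = (c + Dist d c r) % d := by rw [h1]
      _ = r % d := by rw [h2, Nat.mod_eq_of_lt hr]
  have h4 : Dist d r c + Dist d c r ≡ 0 [MOD d] := by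
    have h5 : r + (Dist d r c + Dist d c r) ≡ r + 0 [MOD d] := by
      unfold Nat.ModEq; simpa using hs
    exact Nat.ModEq.add_left_cancel' r h5
  have hdvd : d ∣ (Dist d r c + Dist d c r) := (Nat.modEq_zero_iff_dvd).mp h4
  have l1 := dist_lt_of_ne hr hc hne
  have l2 := dist_lt_of_ne hc hr (Ne.symm hne)
  have p1 := dist_pos d r c
  have p2 := dist_pos d c r
  rcases hdvd with ⟨k, hk⟩
  rcases k with _ | _ | k
  · simp at hk; omega
  · simp at hk; omega
  · exfalso
    have : d * 2 ≤ d * (k + 1 + 1) := Nat.mul_le_mul_left d (by omega)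
    omega


section NextPt

open Spiral

variable {d : ℕ} {S : Finset ℕ}

lemma nextPt_nonempty (hd : 0 < d) (hS : ∀ r ∈ S, r < d) (hne : S.Nonempty) (p : ℕ) :
    {q : ℕ | p < q ∧ q % d ∈ S}.Nonempty := by
  obtain ⟨c, hc⟩ := hne
  have hcd : c < d := hS c hc
  have hpd : p % d < d := Nat.mod_lt _ hd
  refine ⟨p + Dist d (p % d) c, ?_, ?_⟩
  · have := dist_pos d (p % d) c; omega
  · show (p + Dist d (p % d) c) % d ∈ S
    rw [← Nat.mod_add_mod, dist_spec hpd hcd]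
    exact hc

variable (hd : 0 < d) (hS : ∀ r ∈ S, r < d) (hne : S.Nonempty)
include hd hS hne

lemma nextPt_gt (p : ℕ) : p < nextPt d S p :=
  (Nat.sInf_mem (nextPt_nonempty hd hS hne p)).1

lemma nextPt_mod_mem (p : ℕ) : (nextPt d S p) % d ∈ S :=
  (Nat.sInf_mem (nextPt_nonempty hd hS hne p)).2

omit hd hS hne in
lemma nextPt_le {p q : ℕ} (h1 : p < q) (h2 : q % d ∈ S) : nextPt d S p ≤ q :=
  Nat.sInf_le ⟨h1, h2⟩

end NextPt

/-- `sig d S r` : minimal positive `s` with `(r+s) % d ∈ S`. -/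
noncomputable def sig (d : ℕ) (S : Finset ℕ) (r : ℕ) : ℕ := Spiral.nextPt d S r - r

section Sig

open Spiral

variable {d : ℕ} {S : Finset ℕ}
variable (hd : 0 < d) (hS : ∀ r ∈ S, r < d) (hne : S.Nonempty)
include hd hS hne

lemma sig_pos (r : ℕ) : 0 < sig d S r := by
  have := nextPt_gt hd hS hne r; unfold sig; omega

lemma add_sig (r : ℕ) : r + sig d S r = nextPt d S r := by
  have := nextPt_gt hd hS hne r; unfold sig; omega

lemma sig_mod_mem (r : ℕ) : (r + sig d S r) % d ∈ S := by
  rw [add_sig hd hS hne]; exact nextPt_mod_mem hd hS hne r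

lemma nextPt_eq (p : ℕ) : nextPt d S p = p + sig d S (p % d) := by
  have hpd : p % d < d := Nat.mod_lt _ hd
  apply le_antisymm
  · apply nextPt_le
    · have := sig_pos hd hS hne (p % d); omega
    · rw [← Nat.mod_add_mod]
      exact sig_mod_mem hd hS hne (p % d)
  · have h1 : p < nextPt d S p := nextPt_gt hd hS hne p
    have h2 : (nextPt d S p) % d ∈ S := nextPt_mod_mem hd hS hne p
    set m := nextPt d S p with hm
    have h3 : nextPt d S (p % d) ≤ p % d + (m - p) := by
      apply nextPt_le
      · omega
      · have : (p % d + (m - p)) % d = (p + (m - p)) % d := Nat.mod_add_mod _ _ _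
        rw [this]
        have : p + (m - p) = m := by omega
        rw [this]; exact h2
    have := nextPt_gt hd hS hne (p % d)
    unfold sig
    omega

lemma sig_le_dist {r : ℕ} (hr : r < d) {c : ℕ} (hc : c ∈ S) : sig d S r ≤ Dist d r c := by
  have hcd : c < d := hS c hc
  have h := nextPt_le (d := d) (S := S) (p := r) (q := r + Dist d r c)
    (by have := dist_pos d r c; omega) (by rw [dist_spec hr hcd]; exact hc)
  unfold sig; omega

lemma sig_le_d {r : ℕ} (hr : r ∈ S) : sig d S r ≤ d :=
  le_trans (sig_le_dist hd hS hne (hS r hr) hr) (dist_le hd r r)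

lemma sig_eq_dist {r : ℕ} (hr : r ∈ S) : sig d S r = Dist d r ((r + sig d S r) % d) := by
  have hrd : r < d := hS r hr
  exact dist_unique hrd (Nat.mod_lt _ hd) (sig_pos hd hS hne r) (sig_le_d hd hS hne hr) rfl

lemma sig_ne_dist_of_not_mem {r c : ℕ} (hr : r < d) (hc : c < d) (hcS : c ∉ S) :
    Dist d r c ≠ sig d S r := by
  intro h
  apply hcS
  have := sig_mod_mem hd hS hne r
  rwa [← h, dist_spec hr hc] at this

/-- Existence and uniqueness of the unique `r ∈ S` that "crosses" `c ∉ S`. -/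
lemma cross_exists_unique {c : ℕ} (hc : c < d) (hcS : c ∉ S) :
    ∃! r, r ∈ S ∧ Dist d r c < sig d S r := by
  obtain ⟨r₀, hr₀S, hmin⟩ := Finset.exists_min_image S (fun r => Dist d r c) hne
  have hr₀d : r₀ < d := hS r₀ hr₀S
  have key : ∀ c' ∈ S, Dist d r₀ c < Dist d r₀ c' := by
    intro c' hc'
    have hc'd : c' < d := hS c' hc'
    have hne' : c' ≠ c := fun h => hcS (h ▸ hc')
    rcases lt_trichotomy (Dist d r₀ c) (Dist d r₀ c') with h | h | h
    · exact h
    · exact absurd (dist_spec hr₀d hc'd ▸ (by rw [← h, dist_spec hr₀d hc] : (r₀ + Dist d r₀ c') % d = c)) (by exact fun hh => hne' hh)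
    · exfalso
      have hsub := dist_sub hr₀d hc'd hc h
      have hmin' := hmin c' hc'
      have := dist_pos d r₀ c'
      omega
  refine ⟨r₀, ⟨hr₀S, ?_⟩, ?_⟩
  · have h1 := sig_eq_dist hd hS hne hr₀S
    have h2 := sig_mod_mem hd hS hne r₀
    rw [h1]
    exact key _ h2
  · rintro r ⟨hrS, hcross⟩
    by_contra hner
    have hrd : r < d := hS r hrS
    have hcross₀ : Dist d r₀ c < sig d S r₀ := by
      have h1 := sig_eq_dist hd hS hne hr₀S
      have h2 := sig_mod_mem hd hS hne r₀
      rw [h1]; exact key _ h2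
    have hdne : Dist d r c ≠ Dist d r₀ c := fun h => hner (dist_inj hrd hr₀d hc h)
    rcases Nat.lt_or_ge (Dist d r₀ c) (Dist d r c) with h | h
    · have hsub := dist_sub' hrd hr₀d hc h
      have := sig_le_dist hd hS hne hrd hr₀S
      have := dist_pos d r₀ c
      omega
    · have h' : Dist d r c < Dist d r₀ c := by omega
      have hsub := dist_sub' hr₀d hrd hc h'
      have := sig_le_dist hd hS hne hr₀d hrS
      have := dist_pos d r c
      omega

lemma cross_sum {c : ℕ} (hc : c < d) (hcS : c ∉ S) :
    ∑ r ∈ S, (if Dist d r c < sig d S r then 1 else 0) = 1 := by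
  classical
  obtain ⟨r₀, ⟨hr₀S, hcross⟩, huniq⟩ := cross_exists_unique hd hS hne hc hcS
  rw [← Finset.sum_filter]
  have hfil : S.filter (fun r => Dist d r c < sig d S r) = {r₀} := by
    ext r
    simp only [Finset.mem_filter, Finset.mem_singleton]
    constructor
    · rintro ⟨h1, h2⟩; exact huniq r ⟨h1, h2⟩
    · rintro rfl; exact ⟨hr₀S, hcross⟩
  rw [hfil, Finset.sum_singleton]

lemma nu_inj {r r' : ℕ} (hr : r ∈ S) (hr' : r' ∈ S)
    (h : (r + sig d S r) % d = (r' + sig d S r') % d) : r = r' := by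
  have hrd : r < d := hS r hr
  have hr'd : r' < d := hS r' hr'
  have hcd : (r + sig d S r) % d < d := Nat.mod_lt _ hd
  have h1 : sig d S r = Dist d r ((r + sig d S r) % d) := sig_eq_dist hd hS hne hr
  have h2 : sig d S r' = Dist d r' ((r + sig d S r) % d) := by
    rw [h]; exact sig_eq_dist hd hS hne hr'
  by_contra hne'
  rcases lt_trichotomy (Dist d r ((r + sig d S r) % d)) (Dist d r' ((r + sig d S r) % d)) with hlt | heq | hlt
  · have hsub := dist_sub' hr'd hrd hcd hlt
    have hle := sig_le_dist hd hS hne hr'd hr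
    have := dist_pos d r ((r + sig d S r) % d)
    omega
  · exact hne' (dist_inj hrd hr'd hcd heq)
  · have hsub := dist_sub' hrd hr'd hcd hlt
    have hle := sig_le_dist hd hS hne hrd hr'
    have := dist_pos d r' ((r + sig d S r) % d)
    omega

end Sig

section Core

open Spiral

variable {d : ℕ} {S : Finset ℕ}
variable (hd : 0 < d) (hS : ∀ r ∈ S, r < d) (hne : S.Nonempty)
include hd hS hne

omit hS hne in
/-- Key modular fact: if `p < q` both exist, the remainder `(q-p) % d` is `Dist (p%d) (q%d)`
when residues differ. -/
lemma rem_eq_dist {p q : ℕ} (hpq : p < q) (hne' : p % d ≠ q % d) :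
    (q - p) % d = Dist d (p % d) (q % d) := by
  have hpd : p % d < d := Nat.mod_lt _ hd
  have hqd : q % d < d := Nat.mod_lt _ hd
  have hdm := Nat.div_add_mod (q - p) d
  set u := (q - p) % d with hu
  set K := (q - p) / d with hK
  have h1 : (p % d + u) % d = q % d := by
    have e1 : (p % d + u) % d = (p + u) % d := Nat.mod_add_mod _ _ _
    have e2 : (p + u + d * K) % d = (p + u) % d := Nat.add_mul_mod_self_left _ _ _
    have e3 : p + u + d * K = q := by omega
    rw [e1, ← e2, e3]
  have hu0 : u ≠ 0 := by
    intro h0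
    rw [h0, Nat.add_zero] at h1
    rw [Nat.mod_mod_of_dvd _ dvd_rfl] at h1
    exact hne' h1
  have hud : u < d := Nat.mod_lt _ hd
  exact dist_unique hpd hqd (by omega) (by omega) h1

/-- High-high pairs: the floor distance is invariant. -/
lemma hh_invariant {p q : ℕ} (hp : p % d ∈ S) (hq : q % d ∈ S) :
    (nextPt d S q - nextPt d S p) / d = (q - p) / d := by
  have hpd : p % d < d := Nat.mod_lt _ hd
  have hqd : q % d < d := Nat.mod_lt _ hd
  rcases le_or_gt q p with hle | hlt
  · -- q ≤ p : both sides are 0 (or p = q)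
    rcases eq_or_lt_of_le hle with heq | hlt'
    · subst heq; simp
    · have h1 : nextPt d S q ≤ p := nextPt_le hlt' hp
      have h2 : p < nextPt d S p := nextPt_gt hd hS hne p
      have e1 : nextPt d S q - nextPt d S p = 0 := by omega
      have e2 : q - p = 0 := by omega
      rw [e1, e2]
  · -- p < q
    rw [nextPt_eq hd hS hne p, nextPt_eq hd hS hne q]
    by_cases hrr : p % d = q % d
    · have e : q + sig d S (q % d) - (p + sig d S (p % d)) = q - p := by rw [hrr]; omega
      rw [e]
    · have hdm := Nat.div_add_mod (q - p) d
      have hrem := rem_eq_dist hd hlt hrr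
      set u := Dist d (p % d) (q % d) with hu
      set K := (q - p) / d with hK
      set σ := sig d S (p % d) with hσ
      set σ' := sig d S (q % d) with hσ'
      have hu1 : 1 ≤ u := dist_pos d _ _
      have hud : u < d := dist_lt_of_ne hpd hqd hrr
      have hσ1 : 1 ≤ σ := sig_pos hd hS hne _
      have hσ'1 : 1 ≤ σ' := sig_pos hd hS hne _
      -- σ' ≤ Dist (q%d) (p%d) = d - u
      have hb1 : σ' ≤ d - u := by
        have h3 := sig_le_dist hd hS hne hqd hp
        have h4 := dist_add_dist hpd hqd hrr
        omega
      -- σ ≤ u + σ'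
      have hb2 : σ ≤ u + σ' := by
        rcases eq_or_lt_of_le (show u + σ' ≤ d by omega) with heq | hlt2
        · have := sig_le_d hd hS hne hp
          omega
        · -- Dist (p%d) (nu (q%d)) = u + σ'
          have hnu : ((q % d) + σ') % d ∈ S := sig_mod_mem hd hS hne _
          have hnud : ((q % d) + σ') % d < d := Nat.mod_lt _ hd
          have hspec : (p % d + (u + σ')) % d = (q % d + σ') % d := by
            have e1 : p % d + (u + σ') = (p % d + u) + σ' := by omega
            rw [e1, ← Nat.mod_add_mod, dist_spec hpd hqd, Nat.mod_add_mod]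
          have h5 : u + σ' = Dist d (p % d) ((q % d + σ') % d) :=
            dist_unique hpd hnud (by omega) (by omega) hspec
          have h6 := sig_le_dist hd hS hne hpd hnu
          omega
      have efin : q + σ' - (p + σ) = d * K + (u + σ' - σ) := by omega
      rw [efin]
      have ht : u + σ' - σ < d := by omega
      rw [Nat.mul_add_div hd, Nat.div_eq_of_lt ht]
      omega

/-- Low-high pairs: the floor distance increases by the crossing indicator. -/
lemma lh_crossing {a p : ℕ} (hap : a < p) (haS : a % d ∉ S) (hp : p % d ∈ S) :
    (nextPt d S p - a) / d
      = (p - a) / d + (if Dist d (p % d) (a % d) < sig d S (p % d) then 1 else 0) := by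
  have hpd : p % d < d := Nat.mod_lt _ hd
  have had : a % d < d := Nat.mod_lt _ hd
  have hrc : a % d ≠ p % d := fun h => haS (h ▸ hp)
  have hdm := Nat.div_add_mod (p - a) d
  have hrem := rem_eq_dist hd hap (hrc)
  set w := Dist d (a % d) (p % d) with hw
  set K := (p - a) / d with hK
  set σ := sig d S (p % d) with hσ
  rw [nextPt_eq hd hS hne p]
  have hw1 : 1 ≤ w := dist_pos d _ _
  have hwd : w < d := dist_lt_of_ne had hpd hrc
  have hσ1 : 1 ≤ σ := sig_pos hd hS hne _
  have hσd : σ ≤ d := sig_le_d hd hS hne hp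
  have hadd : Dist d (a % d) (p % d) + Dist d (p % d) (a % d) = d :=
    dist_add_dist had hpd hrc
  have hne2 : Dist d (p % d) (a % d) ≠ σ := sig_ne_dist_of_not_mem hd hS hne hpd had haS
  rcases Nat.lt_or_ge σ (Dist d (p % d) (a % d)) with hcase | hcase
  · -- no crossing : w + σ < d
    have hlt : w + σ < d := by omega
    have e1 : p + σ - a = d * K + (w + σ) := by omega
    rw [e1, Nat.mul_add_div hd, Nat.div_eq_of_lt hlt, if_neg (by omega)]
  · -- crossing : d ≤ w + σ < 2d
    have hgt : Dist d (p % d) (a % d) < σ := by omega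
    have hlt2 : w + σ - d < d := by omega
    have e1 : p + σ - a = d * (K + 1) + (w + σ - d) := by
      have : d * (K + 1) = d * K + d := by ring
      omega
    rw [e1, Nat.mul_add_div hd, Nat.div_eq_of_lt hlt2, if_pos hgt]

end Core

section Weight

open Spiral

lemma pair_contrib {d : ℕ} (hd : 0 < d) {a b ia ib : ℕ} (hia : ia < d) (hib : ib < d)
    (hlt : ia < ib) :
    ((b * d + ib) - (a * d + ia)) / d + ((a * d + ia) - (b * d + ib)) / d
      = (b - a) + (a - b - 1) := by
  rcases le_or_gt a b with hab | hab
  · set m := b - a with hm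
    have hb : b = a + m := by omega
    have h1 : (b * d + ib) - (a * d + ia) = m * d + (ib - ia) := by
      rw [hb, add_mul]; omega
    have h2 : (a * d + ia) - (b * d + ib) = 0 := by
      rw [hb, add_mul]; omega
    rw [h1, h2, Nat.zero_div, mul_comm, Nat.mul_add_div hd, Nat.div_eq_of_lt (by omega)]
    omega
  · set m := a - b with hm
    have ha : a = b + m := by omega
    have hm1 : 1 ≤ m := by omega
    have hmd : (m - 1) * d = m * d - d := by rw [Nat.sub_mul, one_mul]
    have hdm : d ≤ m * d := by
      calc d = 1 * d := (one_mul d).symm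
      _ ≤ m * d := Nat.mul_le_mul_right d hm1
    have h1 : (b * d + ib) - (a * d + ia) = 0 := by
      rw [ha, add_mul]; omega
    have h2 : (a * d + ia) - (b * d + ib) = (m - 1) * d + (d - (ib - ia)) := by
      rw [ha, add_mul]; omega
    rw [h1, h2, Nat.zero_div, mul_comm, Nat.mul_add_div hd, Nat.div_eq_of_lt (by omega)]
    omega

lemma sum_split {d : ℕ} (F : Fin d → Fin d → ℕ) (hF : ∀ i, F i i = 0) :
    ∑ i, ∑ k, F i k = ∑ i, ∑ k, (if i < k then F i k + F k i else 0) := by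
  have key : ∀ i k, F i k = (if i < k then F i k else 0) + (if k < i then F i k else 0) := by
    intro i k
    rcases lt_trichotomy i k with h | h | h
    · rw [if_pos h, if_neg (lt_asymm h), Nat.add_zero]
    · subst h; simp [hF]
    · rw [if_neg (lt_asymm h), if_pos h, Nat.zero_add]
  calc ∑ i, ∑ k, F i k
      = ∑ i, ∑ k, ((if i < k then F i k else 0) + (if k < i then F i k else 0)) := by
        apply Finset.sum_congr rfl; intro i _; apply Finset.sum_congr rfl; intro k _
        exact key i k
    _ = (∑ i, ∑ k, if i < k then F i k else 0) + (∑ i, ∑ k, if k < i then F i k else 0) := by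
        rw [← Finset.sum_add_distrib]
        apply Finset.sum_congr rfl; intro i _
        rw [← Finset.sum_add_distrib]
    _ = (∑ i, ∑ k, if i < k then F i k else 0) + (∑ i, ∑ k, if i < k then F k i else 0) := by
        congr 1
        rw [Finset.sum_comm]
    _ = ∑ i, ∑ k, (if i < k then F i k + F k i else 0) := by
        rw [← Finset.sum_add_distrib]
        apply Finset.sum_congr rfl; intro i _
        rw [← Finset.sum_add_distrib]
        apply Finset.sum_congr rfl; intro k _
        split <;> simp

lemma enc_injective {d : ℕ} (hd : 0 < d) (y : Fin d → ℕ) :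
    Function.Injective (fun i : Fin d => y i * d + i.val) := by
  intro i k h
  simp only at h
  have h1 : (y i * d + i.val) % d = i.val := by
    rw [add_comm, Nat.add_mul_mod_self_right, Nat.mod_eq_of_lt i.isLt]
  have h2 : (y k * d + k.val) % d = k.val := by
    rw [add_comm, Nat.add_mul_mod_self_right, Nat.mod_eq_of_lt k.isLt]
  apply Fin.ext
  rw [← h1, ← h2, h]

lemma weight_eq_pairsum {d : ℕ} (hd : 0 < d) (y : Fin d → ℕ) :
    weight y = ∑ p ∈ pts d y, ∑ q ∈ pts d y, (q - p) / d := by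
  classical
  have hinj := enc_injective hd y
  unfold pts
  rw [Finset.sum_image (fun a _ b _ h => hinj h)]
  have : ∀ i : Fin d, (∑ q ∈ Finset.image (fun i : Fin d => y i * d + i.val) Finset.univ,
      (q - (y i * d + i.val)) / d)
      = ∑ k : Fin d, ((y k * d + k.val) - (y i * d + i.val)) / d := by
    intro i
    rw [Finset.sum_image (fun a _ b _ h => hinj h)]
  rw [Finset.sum_congr rfl (fun i _ => this i)]
  rw [sum_split (fun i k => ((y k * d + k.val) - (y i * d + i.val)) / d)
    (fun i => by simp)]
  unfold weight
  apply Finset.sum_congr rfl; intro i _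
  apply Finset.sum_congr rfl; intro k _
  split
  · rename_i hik
    exact (pair_contrib hd i.isLt k.isLt (Fin.lt_def.mp hik)).symm
  · rfl

end Weight

end SpiralAux


open SpiralAux

open Spiral in
/-- For every `x ∈ ℕ^d` and every `j ∈ [d]`, the weight satisfies
`W(g_j(x)) = W(x) + j − 1`. -/
theorem statement8 (d : ℕ) (hd : 1 ≤ d) (j : ℕ) (hj1 : 1 ≤ j) (hjd : j ≤ d)
    (x : Fin d → ℕ) : weight (gOp d j x) = weight x + (j - 1) := by
  classical
  have hd0 : 0 < d := hd
  have hinj := enc_injective hd0 x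
  have hcard : (pts d x).card = d := by
    unfold pts
    rw [Finset.card_image_of_injective _ hinj, Finset.card_univ, Fintype.card_fin]
  set L := sortedPts d x with hL
  have hLnodup : L.Nodup := by rw [hL]; exact Finset.sort_nodup _ _
  have hLsort : L.Pairwise (· < ·) := by rw [hL]; exact (Finset.sortedLT_sort _).pairwise
  have hLfin : L.toFinset = pts d x := by rw [hL]; exact Finset.sort_toFinset _ _
  have hLlen : L.length = d := by rw [hL]; unfold sortedPts; rw [Finset.length_sort, hcard]
  set low := L.take (j - 1) with hlowdef
  set high := L.drop (j - 1) with hhighdef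
  have hsplit : low ++ high = L := by rw [hlowdef, hhighdef]; exact List.take_append_drop _ _
  have horder : ∀ a ∈ low, ∀ b ∈ high, a < b := by
    have h := hLsort
    rw [← hsplit] at h
    exact (List.pairwise_append.mp h).2.2
  have hlownd : low.Nodup := by
    rw [hlowdef]; exact List.Nodup.sublist (List.take_sublist _ _) hLnodup
  have hhighnd : high.Nodup := by
    rw [hhighdef]; exact List.Nodup.sublist (List.drop_sublist _ _) hLnodup
  have hlowlen : low.length = j - 1 := by
    rw [hlowdef, List.length_take, hLlen]; omega
  have hhighlen : high.length = d - (j - 1) := by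
    rw [hhighdef, List.length_drop, hLlen]
  have hmemL : ∀ a ∈ L, a ∈ pts d x := fun a ha => by
    rw [← hLfin]; exact List.mem_toFinset.mpr ha
  have hlowmem : ∀ a ∈ low, a ∈ pts d x := fun a ha =>
    hmemL a (hsplit ▸ List.mem_append_left _ ha)
  have hhighmem : ∀ p ∈ high, p ∈ pts d x := fun p hp =>
    hmemL p (hsplit ▸ List.mem_append_right _ hp)
  have himg : (pts d x).image (· % d) = Finset.range d := by
    unfold pts
    rw [Finset.image_image]
    ext a
    simp only [Finset.mem_image, Finset.mem_univ, true_and, Finset.mem_range, Function.comp]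
    constructor
    · rintro ⟨i, rfl⟩
      exact Nat.mod_lt _ hd0
    · intro ha
      refine ⟨⟨a, ha⟩, ?_⟩
      show (x ⟨a, ha⟩ * d + a) % d = a
      rw [add_comm, Nat.add_mul_mod_self_right, Nat.mod_eq_of_lt ha]
  have hresinj : Set.InjOn (· % d) (pts d x) :=
    Finset.injOn_of_card_image_eq (by rw [himg, Finset.card_range, hcard])
  set S : Finset ℕ := high.toFinset.image (· % d) with hSdef
  have hS : ∀ r ∈ S, r < d := by
    intro r hr
    rw [hSdef] at hr
    obtain ⟨p, _, rfl⟩ := Finset.mem_image.mp hr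
    exact Nat.mod_lt _ hd0
  have hhighne : high ≠ [] := by
    intro h
    rw [h] at hhighlen
    simp at hhighlen
    omega
  have hhighres : ∀ p ∈ high, p % d ∈ S := fun p hp => by
    rw [hSdef]; exact Finset.mem_image_of_mem _ (List.mem_toFinset.mpr hp)
  have hSne : S.Nonempty := by
    obtain ⟨p, hp⟩ := List.exists_mem_of_ne_nil high hhighne
    exact ⟨p % d, hhighres p hp⟩
  have hlowres : ∀ a ∈ low, a % d ∉ S := by
    intro a ha hmem
    rw [hSdef] at hmem
    obtain ⟨p, hp, hpe⟩ := Finset.mem_image.mp hmem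
    have hp' : p ∈ high := List.mem_toFinset.mp hp
    have heq : p = a := hresinj (Finset.mem_coe.mpr (hhighmem p hp'))
      (Finset.mem_coe.mpr (hlowmem a ha)) hpe
    have := horder a ha p hp'
    omega
  have hφgt : ∀ p, p < nextPt d S p := nextPt_gt hd0 hS hSne
  have hφmono : ∀ p q, q % d ∈ S → p < q → nextPt d S p < nextPt d S q :=
    fun p q hq hlt => lt_of_le_of_lt (nextPt_le hlt hq) (hφgt q)
  set B := high.toFinset with hB
  set A := low.toFinset with hA
  have hBmem : ∀ p ∈ B, p % d ∈ S := fun p hp => hhighres p (List.mem_toFinset.mp hp)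
  have hφinj : ∀ p ∈ B, ∀ q ∈ B, nextPt d S p = nextPt d S q → p = q := by
    intro p hp q hq h
    rcases lt_trichotomy p q with hlt | heq | hlt
    · exact absurd h (ne_of_lt (hφmono p q (hBmem q hq) hlt))
    · exact heq
    · exact absurd h.symm (ne_of_lt (hφmono q p (hBmem p hp) hlt))
  have hnures : ∀ p, (nextPt d S p) % d = (p % d + sig d S (p % d)) % d := by
    intro p
    rw [nextPt_eq hd0 hS hSne p]
    exact (Nat.mod_add_mod _ _ _).symm
  have hresinjB : ∀ p ∈ B, ∀ q ∈ B, p % d = q % d → p = q := by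
    intro p hp q hq h
    exact hresinj (Finset.mem_coe.mpr (hhighmem p (List.mem_toFinset.mp hp)))
      (Finset.mem_coe.mpr (hhighmem q (List.mem_toFinset.mp hq))) h
  have hφresinj : ∀ p ∈ B, ∀ q ∈ B, (nextPt d S p) % d = (nextPt d S q) % d → p = q := by
    intro p hp q hq h
    rw [hnures p, hnures q] at h
    exact hresinjB p hp q hq (nu_inj hd0 hS hSne (hBmem p hp) (hBmem q hq) h)
  have hordAB : ∀ a ∈ A, ∀ p ∈ B, a < p := fun a ha p hp =>
    horder a (List.mem_toFinset.mp ha) p (List.mem_toFinset.mp hp)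
  have hABdisj : Disjoint A B := by
    rw [Finset.disjoint_left]
    intro a haA haB
    have := hordAB a haA a haB
    omega
  have hAB'disj : Disjoint A (B.image (nextPt d S)) := by
    rw [Finset.disjoint_left]
    intro a haA hmem
    obtain ⟨p, hp, rfl⟩ := Finset.mem_image.mp hmem
    exact hlowres _ (List.mem_toFinset.mp haA) (nextPt_mod_mem hd0 hS hSne p)
  have hcardA : A.card = j - 1 := by
    rw [hA, List.toFinset_card_of_nodup hlownd, hlowlen]
  have hcardB : B.card = d - (j - 1) := by
    rw [hB, List.toFinset_card_of_nodup hhighnd, hhighlen]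
  have hcardB' : (B.image (nextPt d S)).card = d - (j - 1) := by
    rw [Finset.card_image_of_injOn (fun p hp q hq h =>
      hφinj p (Finset.mem_coe.mp hp) q (Finset.mem_coe.mp hq) h), hcardB]
  have hcardS : S.card = d - (j - 1) := by
    rw [hSdef, Finset.card_image_of_injOn (fun p hp q hq h =>
      hresinjB p (Finset.mem_coe.mp hp) q (Finset.mem_coe.mp hq) h)]
    rw [hcardB]
  have hB'res : (B.image (nextPt d S)).image (· % d) = S := by
    apply Finset.eq_of_subset_of_card_le
    · intro r hr
      obtain ⟨b, hb, rfl⟩ := Finset.mem_image.mp hr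
      obtain ⟨p, hp, rfl⟩ := Finset.mem_image.mp hb
      exact nextPt_mod_mem hd0 hS hSne p
    · rw [hcardS]
      have : ((B.image (nextPt d S)).image (· % d)).card = (B.image (nextPt d S)).card := by
        apply Finset.card_image_of_injOn
        intro p' hp' q' hq' h
        obtain ⟨p, hp, rfl⟩ := Finset.mem_image.mp (Finset.mem_coe.mp hp')
        obtain ⟨q, hq, rfl⟩ := Finset.mem_image.mp (Finset.mem_coe.mp hq')
        rw [hφresinj p hp q hq h]
      rw [this, hcardB']
  have hdisjres : Disjoint (A.image (· % d)) S := by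
    rw [Finset.disjoint_left]
    intro r hr hrS
    obtain ⟨a, ha, rfl⟩ := Finset.mem_image.mp hr
    exact hlowres a (List.mem_toFinset.mp ha) hrS
  have hAresinj : ∀ p ∈ A, ∀ q ∈ A, p % d = q % d → p = q := by
    intro p hp q hq h
    exact hresinj (Finset.mem_coe.mpr (hlowmem p (List.mem_toFinset.mp hp)))
      (Finset.mem_coe.mpr (hlowmem q (List.mem_toFinset.mp hq))) h
  have hAres_card : (A.image (· % d)).card = j - 1 := by
    rw [Finset.card_image_of_injOn (fun p hp q hq h =>
      hAresinj p (Finset.mem_coe.mp hp) q (Finset.mem_coe.mp hq) h), hcardA]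
  set Q : Finset ℕ := A ∪ (high.map (nextPt d S)).toFinset with hQdef
  have hmapfin : (high.map (nextPt d S)).toFinset = B.image (nextPt d S) := by
    rw [hB]; ext a; simp
  have hQ : Q = A ∪ B.image (nextPt d S) := by rw [hQdef, hmapfin]
  have hQimg : Q.image (· % d) = Finset.range d := by
    rw [hQ, Finset.image_union, hB'res]
    apply Finset.eq_of_subset_of_card_le
    · intro r hr
      rcases Finset.mem_union.mp hr with h | h
      · obtain ⟨a, _, rfl⟩ := Finset.mem_image.mp h
        exact Finset.mem_range.mpr (Nat.mod_lt _ hd0)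
      · exact Finset.mem_range.mpr (hS r h)
    · rw [Finset.card_range, Finset.card_union_of_disjoint hdisjres, hAres_card, hcardS]
      omega
  have hcardQ : Q.card = d := by
    rw [hQ, Finset.card_union_of_disjoint hAB'disj, hcardA, hcardB']
    omega
  have hQinj : Set.InjOn (· % d) Q :=
    Finset.injOn_of_card_image_eq (by rw [hQimg, Finset.card_range, hcardQ])
  have hexists : ∀ i : Fin d, ∃ q, q ∈ Q ∧ q % d = i.val := by
    intro i
    have : (i : ℕ) ∈ Q.image (· % d) := by
      rw [hQimg]; exact Finset.mem_range.mpr i.isLt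
    obtain ⟨q, hq, hqe⟩ := Finset.mem_image.mp this
    exact ⟨q, hq, hqe⟩
  choose qi hqiQ hqires using hexists
  have hfil : ∀ i : Fin d, Q.filter (fun q => q % d = i.val) = {qi i} := by
    intro i
    ext q
    simp only [Finset.mem_filter, Finset.mem_singleton]
    constructor
    · rintro ⟨hq, hres⟩
      exact hQinj (Finset.mem_coe.mpr hq) (Finset.mem_coe.mpr (hqiQ i))
        (by show q % d = qi i % d; rw [hres, hqires i])
    · rintro rfl
      exact ⟨hqiQ i, hqires i⟩
  have hval : ∀ i : Fin d, gOp d j x i = qi i / d := by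
    intro i
    have hopen : gOp d j x i = ∑ q ∈ Q.filter (fun q => q % d = i.val), q / d := rfl
    rw [hopen, hfil, Finset.sum_singleton]
  have hpts' : pts d (gOp d j x) = Q := by
    unfold pts
    ext a
    simp only [Finset.mem_image, Finset.mem_univ, true_and]
    constructor
    · rintro ⟨i, rfl⟩
      rw [hval i]
      have h1 : qi i % d = i.val := hqires i
      have h2 := Nat.div_add_mod (qi i) d
      have h3 : qi i / d * d = d * (qi i / d) := mul_comm _ _
      have h4 : qi i / d * d + i.val = qi i := by omega
      rw [h4]
      exact hqiQ i
    · intro haQ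
      refine ⟨⟨a % d, Nat.mod_lt _ hd0⟩, ?_⟩
      have hres : qi ⟨a % d, Nat.mod_lt _ hd0⟩ % d = a % d := hqires _
      have hqa : qi ⟨a % d, Nat.mod_lt _ hd0⟩ = a :=
        hQinj (Finset.mem_coe.mpr (hqiQ _)) (Finset.mem_coe.mpr haQ)
          (by show qi ⟨a % d, Nat.mod_lt _ hd0⟩ % d = a % d; rw [hres])
      rw [hval, hqa]
      show a / d * d + a % d = a
      have h2 := Nat.div_add_mod a d
      have h3 : a / d * d = d * (a / d) := mul_comm _ _
      omega
  have hPsplit : pts d x = A ∪ B := by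
    rw [← hLfin, ← hsplit, List.toFinset_append, hA, hB]
  -- reindexing sums over B' by B
  -- main computation
  rw [weight_eq_pairsum hd0, weight_eq_pairsum hd0, hpts', hPsplit, hQ]
  have hreB : ∀ p ∈ A, ∑ q ∈ B.image (nextPt d S), (q - p) / d
      = ∑ q ∈ B, (nextPt d S q - p) / d := fun p _ => Finset.sum_image hφinj
  have step2 : ∀ p ∈ A, ∑ q ∈ B, (nextPt d S q - p) / d
      = (∑ q ∈ B, (q - p) / d) + 1 := by
    intro p hp
    have hcong : ∀ q ∈ B, (nextPt d S q - p) / d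
        = (q - p) / d + (if Dist d (q % d) (p % d) < sig d S (q % d) then 1 else 0) :=
      fun q hq => lh_crossing hd0 hS hSne (hordAB p hp q hq)
        (hlowres p (List.mem_toFinset.mp hp)) (hBmem q hq)
    rw [Finset.sum_congr rfl hcong, Finset.sum_add_distrib]
    congr 1
    have hre : ∑ q ∈ B, (if Dist d (q % d) (p % d) < sig d S (q % d) then 1 else 0)
        = ∑ r ∈ S, (if Dist d r (p % d) < sig d S r then 1 else 0) := by
      have h9 : ∑ r ∈ Finset.image (fun q => q % d) B,
            (if Dist d r (p % d) < sig d S r then 1 else 0)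
          = ∑ q ∈ B, (if Dist d (q % d) (p % d) < sig d S (q % d) then 1 else 0) :=
        Finset.sum_image hresinjB
      rw [← hSdef] at h9
      exact h9.symm
    rw [hre]
    exact cross_sum hd0 hS hSne (Nat.mod_lt _ hd0) (hlowres p (List.mem_toFinset.mp hp))
  have step3 : ∀ p ∈ B, ∑ q ∈ A, (q - nextPt d S p) / d = ∑ q ∈ A, (q - p) / d := by
    intro p hp
    refine Finset.sum_congr rfl fun q hq => ?_
    have h1 : q < p := hordAB q hq p hp
    have h2 : p < nextPt d S p := hφgt p
    have e1 : q - nextPt d S p = 0 := by omega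
    have e2 : q - p = 0 := by omega
    rw [e1, e2]
  have step4 : ∀ p ∈ B, ∑ q ∈ B, (nextPt d S q - nextPt d S p) / d
      = ∑ q ∈ B, (q - p) / d := fun p hp =>
    Finset.sum_congr rfl fun q hq => hh_invariant hd0 hS hSne (hBmem p hp) (hBmem q hq)
  -- expand both sides
  rw [Finset.sum_union hAB'disj, Finset.sum_union hABdisj]
  have lhsA : ∑ p ∈ A, ∑ q ∈ A ∪ B.image (nextPt d S), (q - p) / d
      = (∑ p ∈ A, ∑ q ∈ A, (q - p) / d) + ((∑ p ∈ A, ∑ q ∈ B, (q - p) / d) + (j - 1)) := by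
    calc ∑ p ∈ A, ∑ q ∈ A ∪ B.image (nextPt d S), (q - p) / d
        = ∑ p ∈ A, ((∑ q ∈ A, (q - p) / d) + ((∑ q ∈ B, (q - p) / d) + 1)) := by
          refine Finset.sum_congr rfl fun p hp => ?_
          rw [Finset.sum_union hAB'disj, hreB p hp, step2 p hp]
      _ = (∑ p ∈ A, ∑ q ∈ A, (q - p) / d)
            + ((∑ p ∈ A, ∑ q ∈ B, (q - p) / d) + ∑ p ∈ A, 1) := by
          rw [Finset.sum_add_distrib, Finset.sum_add_distrib]
      _ = _ := by rw [Finset.sum_const, hcardA]; simp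
  have lhsB : ∑ p ∈ B.image (nextPt d S), ∑ q ∈ A ∪ B.image (nextPt d S), (q - p) / d
      = (∑ p ∈ B, ∑ q ∈ A, (q - p) / d) + (∑ p ∈ B, ∑ q ∈ B, (q - p) / d) := by
    calc ∑ p ∈ B.image (nextPt d S), ∑ q ∈ A ∪ B.image (nextPt d S), (q - p) / d
        = ∑ p ∈ B, ∑ q ∈ A ∪ B.image (nextPt d S), (q - nextPt d S p) / d :=
          Finset.sum_image hφinj
      _ = ∑ p ∈ B, ((∑ q ∈ A, (q - p) / d) + (∑ q ∈ B, (q - p) / d)) := by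
          refine Finset.sum_congr rfl fun p hp => ?_
          rw [Finset.sum_union hAB'disj]
          have : ∑ q ∈ B.image (nextPt d S), (q - nextPt d S p) / d
              = ∑ q ∈ B, (nextPt d S q - nextPt d S p) / d := Finset.sum_image hφinj
          rw [this, step3 p hp, step4 p hp]
      _ = _ := Finset.sum_add_distrib
  rw [lhsA, lhsB]
  have rhsA : ∀ p ∈ A, ∑ q ∈ A ∪ B, (q - p) / d
      = (∑ q ∈ A, (q - p) / d) + (∑ q ∈ B, (q - p) / d) := fun p _ =>
    Finset.sum_union hABdisj
  have rhsB : ∀ p ∈ B, ∑ q ∈ A ∪ B, (q - p) / d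
      = (∑ q ∈ A, (q - p) / d) + (∑ q ∈ B, (q - p) / d) := fun p _ =>
    Finset.sum_union hABdisj
  rw [Finset.sum_congr rfl rhsA, Finset.sum_congr rfl rhsB]
  rw [Finset.sum_add_distrib, Finset.sum_add_distrib]
  omega
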